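/- arXiv:1611.07345 — 2 statements merged into one kernel-verified Lean document; each statement's English description precedes it below -/
import Mathlib

section
/- Let p, q be probability densities and w a weight function with ∫pw > 0 and ∫qw > 0, such that x ↦ w(x)·q(x)·log q(x) is μ-integrable and x ↦ w(x)·q(x)·log p(x) is quasi-integrable with ∫ w·q·log p dμ < ∞. Then the penalized weighted likelihood rule is strictly locally proper: ∫_X S^{PWL}(p,x;w)·q(x) dμ(x) ≥ ∫_X S^{PWL}(q,x;w)·q(x) dμ(x) (in the extended reals), with equality if and only if p = q μ-a.e. on {w > 0}. -/
open MeasureTheory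
open scoped ENNReal

noncomputable section

/-- A probability density with respect to `μ`. -/
def IsDensity {X : Type*} [MeasurableSpace X] (μ : Measure X) (p : X → ℝ) : Prop :=
  Measurable p ∧ (∀ x, 0 ≤ p x) ∧ ∫ x, p x ∂μ = 1

/-- A weight function: measurable with values in `[0,1]`. -/
def IsWeight {X : Type*} [MeasurableSpace X] (w : X → ℝ) : Prop :=
  Measurable w ∧ ∀ x, w x ∈ Set.Icc (0 : ℝ) 1

/-- The extended-real logarithm of a real number: `log r` for `r > 0`, and `−∞`
for `r ≤ 0`. -/
def elog (r : ℝ) : EReal := if r ≤ 0 then ⊥ else ((Real.log r : ℝ) : EReal)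

/-- The positive part of an extended real, as an extended nonnegative real. -/
def epos (e : EReal) : ℝ≥0∞ := if e = ⊤ then ⊤ else ENNReal.ofReal e.toReal

/-- The quasi-integral of an extended-real-valued function: positive part minus
negative part (each a lower Lebesgue integral). -/
def eintE {X : Type*} [MeasurableSpace X] (μ : Measure X) (f : X → EReal) : EReal :=
  ((∫⁻ x, epos (f x) ∂μ : ℝ≥0∞) : EReal) - ((∫⁻ x, epos (-f x) ∂μ : ℝ≥0∞) : EReal)

/-- The renormalized density `p_w(x) = w(x)·p(x) / ∫ p·w dμ`. -/
def renorm {X : Type*} [MeasurableSpace X] (μ : Measure X) (p w : X → ℝ) : X → ℝ :=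
  fun x => w x * p x / ∫ y, p y * w y ∂μ

/-- The penalized weighted likelihood rule `S^PWL(p,x;w) = −w(x)·log p(x) − w(x) + ∫pw`,
with values in the extended reals (so that `−log p(x) = +∞` when `p(x) = 0`, and
`0·log 0 = 0`). -/
def SPWLe {X : Type*} [MeasurableSpace X] (μ : Measure X) (p w : X → ℝ) (x : X) : EReal :=
  -((w x : ℝ) : EReal) * elog (p x) + (((-(w x) + ∫ y, p y * w y ∂μ : ℝ)) : EReal)

/-! ### Auxiliary lemmas -/

lemma ennreal_coe_eq {A : ℝ≥0∞} (h : A ≠ ⊤) : ((A : EReal)) = ((A.toReal : ℝ) : EReal) := by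
  rw [← EReal.toReal_coe_ennreal]
  exact (EReal.coe_toReal (by simpa using h) (by simp)).symm

lemma epos_coe (r : ℝ) : epos ((r : ℝ) : EReal) = ENNReal.ofReal r := by
  simp [epos]

lemma epos_neg_coe (r : ℝ) : epos (-((r : ℝ) : EReal)) = ENNReal.ofReal (-r) := by
  rw [← EReal.coe_neg]; simp [epos]

lemma eintE_congr {X : Type*} [MeasurableSpace X] {μ : Measure X} {f g : X → EReal}
    (h : f =ᵐ[μ] g) : eintE μ f = eintE μ g := by
  unfold eintE
  have e1 : (fun x => epos (f x)) =ᵐ[μ] (fun x => epos (g x)) :=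
    h.mono fun x hx => by simp only [hx]
  have e2 : (fun x => epos (-f x)) =ᵐ[μ] (fun x => epos (-g x)) :=
    h.mono fun x hx => by simp only [hx]
  rw [lintegral_congr_ae e1, lintegral_congr_ae e2]

lemma eintE_coe_of_integrable {X : Type*} [MeasurableSpace X] {μ : Measure X} {g : X → ℝ}
    (hg : Integrable g μ) :
    eintE μ (fun x => ((g x : ℝ) : EReal)) = ((∫ x, g x ∂μ : ℝ) : EReal) := by
  unfold eintE
  simp only [epos_coe, epos_neg_coe]
  have h1 : ∫⁻ x, ENNReal.ofReal (g x) ∂μ ≠ ⊤ :=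
    ((lintegral_ofReal_le_lintegral_enorm g).trans_lt hg.2).ne
  have h2 : ∫⁻ x, ENNReal.ofReal (-g x) ∂μ ≠ ⊤ :=
    ((lintegral_ofReal_le_lintegral_enorm _).trans_lt (by simpa [HasFiniteIntegral] using hg.neg.2)).ne
  rw [integral_eq_lintegral_pos_part_sub_lintegral_neg_part hg,
    ennreal_coe_eq h1, ennreal_coe_eq h2, ← EReal.coe_sub]

lemma eintE_top {X : Type*} [MeasurableSpace X] {μ : Measure X} {f : X → EReal}
    (h1 : ∫⁻ x, epos (f x) ∂μ = ⊤) (h2 : ∫⁻ x, epos (-f x) ∂μ ≠ ⊤) :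
    eintE μ f = ⊤ := by
  unfold eintE
  rw [h1, EReal.coe_ennreal_top, ennreal_coe_eq h2, EReal.top_sub_coe]

lemma eintE_coe_top {X : Type*} [MeasurableSpace X] {μ : Measure X} {g : X → ℝ}
    (hmeas : AEStronglyMeasurable g μ) (hnint : ¬ Integrable g μ)
    (hneg : Integrable (fun x => max (-g x) 0) μ) :
    eintE μ (fun x => ((g x : ℝ) : EReal)) = ⊤ := by
  have hneg' : ∫⁻ x, ENNReal.ofReal (-g x) ∂μ ≠ ⊤ := by
    have hb : ∀ x, ENNReal.ofReal (-g x) ≤ (‖max (-g x) 0‖₊ : ℝ≥0∞) := fun x => by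
      rw [← enorm_eq_nnnorm, Real.enorm_eq_ofReal (le_max_right _ _)]
      exact ENNReal.ofReal_le_ofReal (le_max_left _ _)
    exact ((lintegral_mono hb).trans_lt hneg.2).ne
  have hpos : ∫⁻ x, ENNReal.ofReal (g x) ∂μ = ⊤ := by
    by_contra h
    apply hnint
    refine ⟨hmeas, ?_⟩
    have hb : ∀ x, (‖g x‖₊ : ℝ≥0∞) ≤ ENNReal.ofReal (g x) + ENNReal.ofReal (-g x) := fun x => by
      rcases le_total 0 (g x) with hx | hx
      · rw [← enorm_eq_nnnorm, Real.enorm_eq_ofReal hx]; exact le_add_right le_rfl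
      · rw [← nnnorm_neg, ← enorm_eq_nnnorm, Real.enorm_eq_ofReal (neg_nonneg.2 hx)]; exact le_add_left le_rfl
    have hcalc : (∫⁻ x, (‖g x‖₊ : ℝ≥0∞) ∂μ) ≤
        (∫⁻ x, ENNReal.ofReal (g x) ∂μ) + ∫⁻ x, ENNReal.ofReal (-g x) ∂μ := by
      refine (lintegral_mono hb).trans ?_
      exact (lintegral_add_left' (ENNReal.measurable_ofReal.comp_aemeasurable
        hmeas.aemeasurable) _).le
    exact hcalc.trans_lt
      (ENNReal.add_lt_top.2 ⟨lt_top_iff_ne_top.2 h, lt_top_iff_ne_top.2 hneg'⟩)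
  apply eintE_top
  · simpa only [epos_coe] using hpos
  · simpa only [epos_neg_coe] using hneg'

lemma phi_nonneg (a r s : ℝ) (ha : 0 ≤ a) (hr : 0 ≤ r) (hs : 0 ≤ s)
    (hE : ¬(r = 0 ∧ 0 < a ∧ 0 < s)) :
    0 ≤ a * s * Real.log s - a * s * Real.log r + (a * r - a * s) := by
  rcases ha.lt_or_eq with ha' | ha'
  · rcases hs.lt_or_eq with hs' | hs'
    · have hr' : 0 < r := hr.lt_or_eq.resolve_right (fun h => hE ⟨h.symm, ha', hs'⟩)
      have h1 : Real.log (r / s) ≤ r / s - 1 := Real.log_le_sub_one_of_pos (by positivity)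
      have h2 : Real.log (r / s) = Real.log r - Real.log s := Real.log_div hr'.ne' hs'.ne'
      have h3 : a * s * (r / s - 1) = a * r - a * s := by field_simp
      have h4 : a * s * (Real.log r - Real.log s) ≤ a * r - a * s := by
        rw [← h2, ← h3]
        exact mul_le_mul_of_nonneg_left h1 (by positivity)
      nlinarith [h4]
    · rw [← hs']
      have h : a * 0 * Real.log 0 - a * 0 * Real.log r + (a * r - a * 0) = a * r := by ring
      rw [h]; positivity
  · rw [← ha']; ring_nf; exact le_refl 0

lemma phi_eq_zero (a r s : ℝ) (ha : 0 ≤ a) (hr : 0 ≤ r) (hs : 0 ≤ s)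
    (hE : ¬(r = 0 ∧ 0 < a ∧ 0 < s))
    (h : a * s * Real.log s - a * s * Real.log r + (a * r - a * s) = 0) :
    a * r = a * s := by
  rcases ha.lt_or_eq with ha' | ha'
  · rcases hs.lt_or_eq with hs' | hs'
    · have hr' : 0 < r := hr.lt_or_eq.resolve_right (fun hh => hE ⟨hh.symm, ha', hs'⟩)
      by_contra hne
      have hrs : r ≠ s := fun he => hne (by rw [he])
      have h1 : Real.log (r / s) < r / s - 1 :=
        Real.log_lt_sub_one_of_pos (by positivity)
          (fun hh => hrs (by field_simp at hh; linarith))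
      have h2 : Real.log (r / s) = Real.log r - Real.log s := Real.log_div hr'.ne' hs'.ne'
      have h3 : a * s * (r / s - 1) = a * r - a * s := by field_simp
      have h4 : a * s * (Real.log r - Real.log s) < a * r - a * s := by
        rw [← h2, ← h3]
        exact mul_lt_mul_of_pos_left h1 (by positivity)
      nlinarith [h4]
    · rw [← hs'] at h ⊢
      have hz : a * r = 0 := by nlinarith [h]
      rw [hz]; ring
  · rw [← ha']; ring

lemma key_pointwise (a c r s : ℝ) (ha : 0 ≤ a) (hr : 0 ≤ r) (hs : 0 ≤ s) :
    (-(a : EReal) * elog r + ((c : ℝ) : EReal)) * ((s : ℝ) : EReal) =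
      if r = 0 ∧ 0 < a ∧ 0 < s then (⊤ : EReal)
      else (((-a * Real.log r + c) * s : ℝ) : EReal) := by
  rcases hr.lt_or_eq with hr' | hr'
  · rw [elog, if_neg (not_le.2 hr'), if_neg (by rintro ⟨h, _⟩; exact hr'.ne' h),
      ← EReal.coe_neg, ← EReal.coe_mul, ← EReal.coe_add, ← EReal.coe_mul]
  · rw [← hr', elog, if_pos le_rfl]
    rcases ha.lt_or_eq with ha' | ha'
    swap
    · rw [← ha', if_neg (by rintro ⟨_, h, _⟩; exact lt_irrefl 0 h)]
      norm_num [EReal.zero_mul]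
    · rw [← EReal.coe_neg, EReal.coe_mul_bot_of_neg (by linarith), EReal.top_add_coe]
      rcases hs.lt_or_eq with hs' | hs'
      · rw [if_pos ⟨rfl, ha', hs'⟩, EReal.top_mul_coe_of_pos hs']
      · rw [← hs', if_neg (by rintro ⟨_, _, h⟩; exact lt_irrefl 0 h)]
        norm_num

/-- The penalized weighted likelihood rule is strictly locally proper:
the expected score of `p` under `q` is at least that of `q`, with equality iff
`p = q` μ-a.e. on `{w > 0}`. -/
theorem SPWL_strictly_locally_proper
    {X : Type*} [MeasurableSpace X] (μ : Measure X) [SigmaFinite μ]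
    (p q w : X → ℝ) (hp : IsDensity μ p) (hq : IsDensity μ q) (hw : IsWeight w)
    (hpw : 0 < ∫ y, p y * w y ∂μ) (hqw : 0 < ∫ y, q y * w y ∂μ)
    (hqq : Integrable (fun x => w x * q x * Real.log (q x)) μ)
    (hqp : Integrable (fun x => max (w x * q x * Real.log (p x)) 0) μ) :
    eintE μ (fun x => SPWLe μ q w x * ((q x : ℝ) : EReal))
        ≤ eintE μ (fun x => SPWLe μ p w x * ((q x : ℝ) : EReal)) ∧
    (eintE μ (fun x => SPWLe μ p w x * ((q x : ℝ) : EReal))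
        = eintE μ (fun x => SPWLe μ q w x * ((q x : ℝ) : EReal))
      ↔ ∀ᵐ x ∂μ, 0 < w x → p x = q x) := by
  obtain ⟨hpm, hpnn, hpint1⟩ := hp
  obtain ⟨hqm, hqnn, hqint1⟩ := hq
  obtain ⟨hwm, hwb⟩ := hw
  have hwnn : ∀ x, 0 ≤ w x := fun x => (hwb x).1
  have hwle : ∀ x, w x ≤ 1 := fun x => (hwb x).2
  set Zp := ∫ y, p y * w y ∂μ with hZp
  set Zq := ∫ y, q y * w y ∂μ with hZq
  set gp : X → ℝ := fun x => (-(w x) * Real.log (p x) + (-(w x) + Zp)) * q x with hgp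
  set gq : X → ℝ := fun x => (-(w x) * Real.log (q x) + (-(w x) + Zq)) * q x with hgq
  -- pointwise identification of the integrands
  have hfp : ∀ x, SPWLe μ p w x * ((q x : ℝ) : EReal)
      = if p x = 0 ∧ 0 < w x ∧ 0 < q x then (⊤ : EReal) else ((gp x : ℝ) : EReal) := by
    intro x
    simp only [SPWLe, hgp]
    rw [← hZp]
    exact key_pointwise (w x) (-(w x) + Zp) (p x) (q x) (hwnn x) (hpnn x) (hqnn x)
  have hfq : ∀ x, SPWLe μ q w x * ((q x : ℝ) : EReal) = ((gq x : ℝ) : EReal) := by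
    intro x
    simp only [SPWLe, hgq]
    rw [← hZq]
    rw [key_pointwise (w x) (-(w x) + Zq) (q x) (q x) (hwnn x) (hqnn x) (hqnn x),
      if_neg (by rintro ⟨h1, _, h3⟩; exact h3.ne' h1)]
  -- basic integrability
  have hqInt : Integrable q μ := by
    by_contra h
    rw [integral_undef h] at hqint1
    exact one_ne_zero hqint1.symm
  have hpInt : Integrable p μ := by
    by_contra h
    rw [integral_undef h] at hpint1
    exact one_ne_zero hpint1.symm
  have hcpInt : Integrable (fun x => (-(w x) + Zp) * q x) μ :=
    hqInt.bdd_mul ((hwm.neg.add_const Zp).aestronglyMeasurable)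
      (Filter.Eventually.of_forall fun x => by
        rw [Real.norm_eq_abs]
        calc |(-(w x) + Zp)| ≤ |(-(w x))| + |Zp| := abs_add_le _ _
          _ ≤ 1 + |Zp| := by
            rw [abs_neg, abs_of_nonneg (hwnn x)]; linarith [hwle x])
  have hcqInt : Integrable (fun x => (-(w x) + Zq) * q x) μ :=
    hqInt.bdd_mul ((hwm.neg.add_const Zq).aestronglyMeasurable)
      (Filter.Eventually.of_forall fun x => by
        rw [Real.norm_eq_abs]
        calc |(-(w x) + Zq)| ≤ |(-(w x))| + |Zq| := abs_add_le _ _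
          _ ≤ 1 + |Zq| := by
            rw [abs_neg, abs_of_nonneg (hwnn x)]; linarith [hwle x])
  have hgqInt : Integrable gq μ := by
    have h1 : Integrable (fun x => -(w x * q x * Real.log (q x)) + (-(w x) + Zq) * q x) μ :=
      hqq.neg.add hcqInt
    exact h1.congr (Filter.Eventually.of_forall fun x => by simp only [hgq]; ring)
  have hwpInt : Integrable (fun x => w x * p x) μ :=
    hpInt.bdd_mul hwm.aestronglyMeasurable
      (Filter.Eventually.of_forall fun x => by
        rw [Real.norm_eq_abs, abs_of_nonneg (hwnn x)]; exact hwle x)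
  have hwqInt : Integrable (fun x => w x * q x) μ :=
    hqInt.bdd_mul hwm.aestronglyMeasurable
      (Filter.Eventually.of_forall fun x => by
        rw [Real.norm_eq_abs, abs_of_nonneg (hwnn x)]; exact hwle x)
  have hgpmeas : Measurable gp := by
    simp only [hgp]
    exact ((hwm.neg.mul (Real.measurable_log.comp hpm)).add (hwm.neg.add_const Zp)).mul hqm
  have hnegInt : Integrable (fun x => max (-gp x) 0) μ := by
    refine Integrable.mono' (hqp.add hcpInt.norm)
      ((hgpmeas.neg.max measurable_const).aestronglyMeasurable)
      (Filter.Eventually.of_forall fun x => ?_)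
    simp only [Pi.add_apply]
    rw [Real.norm_of_nonneg (le_max_right _ _)]
    refine max_le ?_ (by positivity)
    have hgpx : -gp x = w x * q x * Real.log (p x) - (-(w x) + Zp) * q x := by
      simp only [hgp]; ring
    rw [hgpx, Real.norm_eq_abs]
    have h1 := le_max_left (w x * q x * Real.log (p x)) 0
    have h2 := neg_abs_le ((-(w x) + Zp) * q x)
    linarith
  -- finiteness of the negative part of the p-side integrand
  have hnegfin : ∫⁻ x, epos (-(SPWLe μ p w x * ((q x : ℝ) : EReal))) ∂μ ≠ ⊤ := by
    have hb : ∀ x, epos (-(SPWLe μ p w x * ((q x : ℝ) : EReal)))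
        ≤ (‖max (-gp x) 0‖₊ : ℝ≥0∞) := fun x => by
      rw [hfp x]
      by_cases hx : p x = 0 ∧ 0 < w x ∧ 0 < q x
      · rw [if_pos hx]
        have he : epos (-(⊤ : EReal)) = 0 := by simp [epos]
        rw [he]; exact zero_le
      · rw [if_neg hx, epos_neg_coe, ← enorm_eq_nnnorm, Real.enorm_eq_ofReal (le_max_right _ _)]
        exact ENNReal.ofReal_le_ofReal (le_max_left _ _)
    exact ((lintegral_mono hb).trans_lt hnegInt.2).ne
  -- if p = q a.e. on {w > 0} then the two integrands agree a.e.
  have hcongr : (∀ᵐ x ∂μ, 0 < w x → p x = q x) →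
      (fun x => SPWLe μ p w x * ((q x : ℝ) : EReal))
        =ᵐ[μ] (fun x => SPWLe μ q w x * ((q x : ℝ) : EReal)) := by
    intro hae
    have hZ : Zp = Zq := by
      rw [hZp, hZq]
      refine integral_congr_ae ?_
      filter_upwards [hae] with x hx
      rcases (hwnn x).lt_or_eq with hw0 | hw0
      · rw [hx hw0]
      · rw [← hw0, mul_zero, mul_zero]
    filter_upwards [hae] with x hx
    simp only [SPWLe]
    rw [← hZp, ← hZq, hZ]
    rcases (hwnn x).lt_or_eq with hw0 | hw0
    · rw [hx hw0]
    · rw [← hw0]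
      norm_num [EReal.zero_mul]
  -- value of the q-side
  have hLq : eintE μ (fun x => SPWLe μ q w x * ((q x : ℝ) : EReal))
      = ((∫ x, gq x ∂μ : ℝ) : EReal) := by
    rw [eintE_congr (Filter.Eventually.of_forall fun x => hfq x)]
    exact eintE_coe_of_integrable hgqInt
  by_cases hE : μ {x | p x = 0 ∧ 0 < w x ∧ 0 < q x} = 0
  · -- exception set is null
    have hEae : ∀ᵐ x ∂μ, ¬(p x = 0 ∧ 0 < w x ∧ 0 < q x) := by
      rw [ae_iff]; simpa using hE
    have haefp : (fun x => SPWLe μ p w x * ((q x : ℝ) : EReal))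
        =ᵐ[μ] (fun x => ((gp x : ℝ) : EReal)) := by
      filter_upwards [hEae] with x hx
      rw [hfp x, if_neg hx]
    by_cases hgpInt : Integrable gp μ
    · -- fully finite case
      have hLp : eintE μ (fun x => SPWLe μ p w x * ((q x : ℝ) : EReal))
          = ((∫ x, gp x ∂μ : ℝ) : EReal) := by
        rw [eintE_congr haefp]; exact eintE_coe_of_integrable hgpInt
      have hwqlogp : Integrable (fun x => w x * q x * Real.log (p x)) μ := by
        refine (hcpInt.sub hgpInt).congr (Filter.Eventually.of_forall fun x => ?_)
        simp only [Pi.sub_apply, hgp]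
        ring
      have huInt : Integrable
          (fun x => w x * q x * Real.log (q x) - w x * q x * Real.log (p x)) μ :=
        hqq.sub hwqlogp
      set φ : X → ℝ := fun x =>
        (w x * q x * Real.log (q x) - w x * q x * Real.log (p x))
          + (w x * p x - w x * q x) with hφ
      have hvInt : Integrable (fun x => w x * p x - w x * q x) μ := hwpInt.sub hwqInt
      have hphiInt : Integrable φ μ := huInt.add hvInt
      have hphi0 : 0 ≤ᵐ[μ] φ := by
        filter_upwards [hEae] with x hx
        simp only [hφ, Pi.zero_apply]
        have := phi_nonneg (w x) (p x) (q x) (hwnn x) (hpnn x) (hqnn x) hx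
        linarith
      have hwp_eq : ∫ x, w x * p x ∂μ = Zp := by
        rw [hZp]
        exact integral_congr_ae (Filter.Eventually.of_forall fun x => mul_comm _ _)
      have hwq_eq : ∫ x, w x * q x ∂μ = Zq := by
        rw [hZq]
        exact integral_congr_ae (Filter.Eventually.of_forall fun x => mul_comm _ _)
      have hKey : ∫ x, φ x ∂μ = ∫ x, gp x ∂μ - ∫ x, gq x ∂μ := by
        have e1 : ∫ x, φ x ∂μ
            = (∫ x, (w x * q x * Real.log (q x) - w x * q x * Real.log (p x)) ∂μ)
              + ∫ x, (w x * p x - w x * q x) ∂μ := by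
          simp only [hφ]
          exact integral_add huInt hvInt
        have e2 : ∫ x, (w x * p x - w x * q x) ∂μ = Zp - Zq := by
          rw [integral_sub hwpInt hwqInt, hwp_eq, hwq_eq]
        have e3 : ∫ x, (gp x - gq x) ∂μ = ∫ x, gp x ∂μ - ∫ x, gq x ∂μ :=
          integral_sub hgpInt hgqInt
        have e4 : ∫ x, (gp x - gq x) ∂μ
            = (∫ x, (w x * q x * Real.log (q x) - w x * q x * Real.log (p x)) ∂μ)
              + ∫ x, (Zp - Zq) * q x ∂μ := by
          rw [← integral_add huInt (hqInt.const_mul (Zp - Zq))]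
          refine integral_congr_ae (Filter.Eventually.of_forall fun x => ?_)
          simp only [hgp, hgq]; ring
        have e5 : ∫ x, (Zp - Zq) * q x ∂μ = Zp - Zq := by
          rw [integral_const_mul, hqint1, mul_one]
        rw [e1, e2, ← e3, e4, e5]
      have hphiVal : 0 ≤ ∫ x, φ x ∂μ := integral_nonneg_of_ae hphi0
      rw [hLq, hLp]
      constructor
      · exact EReal.coe_le_coe_iff.mpr (by linarith)
      · rw [EReal.coe_eq_coe_iff]
        constructor
        · intro h
          have hz : ∫ x, φ x ∂μ = 0 := by linarith
          have hphiae := (integral_eq_zero_iff_of_nonneg_ae hphi0 hphiInt).1 hz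
          filter_upwards [hphiae, hEae] with x h1 h2 hwx
          simp only [hφ, Pi.zero_apply] at h1
          have h3 := phi_eq_zero (w x) (p x) (q x) (hwnn x) (hpnn x) (hqnn x) h2 (by linarith)
          exact mul_left_cancel₀ hwx.ne' h3
        · intro hae
          have hphiae : φ =ᵐ[μ] (fun _ => (0 : ℝ)) := by
            filter_upwards [hae] with x hx
            simp only [hφ]
            rcases (hwnn x).lt_or_eq with hw0 | hw0
            · rw [hx hw0]; ring
            · rw [← hw0]; ring
          have hz : ∫ x, φ x ∂μ = 0 := by
            rw [integral_congr_ae hphiae, integral_zero]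
          linarith
    · -- `gp` not integrable : the p-side score is `+∞`
      have hLp : eintE μ (fun x => SPWLe μ p w x * ((q x : ℝ) : EReal)) = ⊤ := by
        rw [eintE_congr haefp]
        exact eintE_coe_top hgpmeas.aestronglyMeasurable hgpInt hnegInt
      rw [hLq, hLp]
      refine ⟨le_top, ?_⟩
      constructor
      · intro h; exact absurd h.symm (EReal.coe_ne_top _)
      · intro hae
        exfalso
        have hcc := eintE_congr (hcongr hae)
        rw [hLq, hLp] at hcc
        exact (EReal.coe_ne_top _) hcc.symm
  · -- exception set has positive measure : the p-side score is `+∞`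
    have hEmeas : MeasurableSet {x | p x = 0 ∧ 0 < w x ∧ 0 < q x} := by
      have h1 : MeasurableSet {x | p x = 0} := hpm (measurableSet_singleton 0)
      have h2 : MeasurableSet {x | 0 < w x} := measurableSet_lt measurable_const hwm
      have h3 : MeasurableSet {x | 0 < q x} := measurableSet_lt measurable_const hqm
      exact h1.inter (h2.inter h3)
    have hpos_top : ∫⁻ x, epos (SPWLe μ p w x * ((q x : ℝ) : EReal)) ∂μ = ⊤ := by
      refine top_le_iff.1 ?_
      calc (⊤ : ℝ≥0∞) = ⊤ * μ {x | p x = 0 ∧ 0 < w x ∧ 0 < q x} :=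
            (ENNReal.top_mul hE).symm
        _ = ∫⁻ x, ({x | p x = 0 ∧ 0 < w x ∧ 0 < q x}.indicator
              (fun _ => (⊤ : ℝ≥0∞))) x ∂μ := by
            rw [lintegral_indicator hEmeas, setLIntegral_const]
        _ ≤ ∫⁻ x, epos (SPWLe μ p w x * ((q x : ℝ) : EReal)) ∂μ := by
            refine lintegral_mono fun x => ?_
            by_cases hx : x ∈ {x | p x = 0 ∧ 0 < w x ∧ 0 < q x}
            · rw [Set.indicator_of_mem hx, hfp x,
                if_pos (show p x = 0 ∧ 0 < w x ∧ 0 < q x from hx)]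
              simp [epos]
            · rw [Set.indicator_of_notMem hx]
              exact zero_le
    have hLp : eintE μ (fun x => SPWLe μ p w x * ((q x : ℝ) : EReal)) = ⊤ :=
      eintE_top hpos_top hnegfin
    rw [hLq, hLp]
    refine ⟨le_top, ?_⟩
    constructor
    · intro h; exact absurd h.symm (EReal.coe_ne_top _)
    · intro hae
      exfalso
      apply hE
      refine measure_mono_null ?_ (ae_iff.1 hae)
      rintro x ⟨h1, h2, h3⟩
      simp only [Set.mem_setOf_eq, not_forall]
      exact ⟨h2, fun hc => h3.ne' ((h1.symm.trans hc).symm)⟩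



end
end

section
/- Let (X, F, μ) be a σ-finite measure space, A ∈ F, p_0 a probability density with P_0(A^c) := 1 − ∫_A p_0 dμ > 0, and α ∈ (0,1). Let φ : X → [0,1] be a measurable test of level α for the composite null hypothesis, i.e. ∫_A φ·p_0 dμ + ∫_{A^c} φ·p dμ ≤ α for every probability density p with p·1_A = p_0·1_A μ-a.e. Define β = min((α − ∫_A φ·p_0 dμ)/P_0(A^c), 1) and φ̃ = φ·1_A + β·1_{A^c}. Then: (i) φ̃ also has level α, i.e. ∫_X φ̃·p dμ ≤ α for every density p with p·1_A = p_0·1_A μ-a.e.; and (ii) φ ≤ φ̃ μ-a.e., so that ∫_X φ̃·q dμ ≥ ∫_X φ·q dμ for every probability density q, i.e. φ̃ is uniformly more powerful than φ. -/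
open MeasureTheory
open scoped Classical ENNReal

noncomputable section

/-- A density is integrable. -/
lemma IsDensity.integrable {X : Type*} [MeasurableSpace X] {μ : Measure X} {p : X → ℝ}
    (hp : IsDensity μ p) : Integrable p μ := by
  by_contra h
  have h2 := hp.2.2
  rw [integral_undef h] at h2
  exact one_ne_zero h2.symm

/-- Let `φ` be a level-`α` test for the composite null hypothesis
`{p : p·1_A = p₀·1_A μ-a.e.}`. With `β = min((α − ∫_A φ·p₀ dμ)/P₀(Aᶜ), 1)` the modified
test `φ̃ = φ·1_A + β·1_{Aᶜ}` (i) also has level `α`, and (ii) dominates `φ` μ-a.e., hence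
is uniformly more powerful than `φ`. -/
theorem censored_test_improvement
    {X : Type*} [MeasurableSpace X] (μ : Measure X) [SigmaFinite μ]
    (A : Set X) (hA : MeasurableSet A)
    (p₀ : X → ℝ) (hp₀ : IsDensity μ p₀)
    (hP₀ : ∫ x in A, p₀ x ∂μ < 1)
    (α : ℝ) (hα : α ∈ Set.Ioo (0 : ℝ) 1)
    (φ : X → ℝ) (hφm : Measurable φ) (hφ01 : ∀ x, φ x ∈ Set.Icc (0 : ℝ) 1)
    -- `φ` has level `α` for the composite null hypothesis:
    (hlevel : ∀ p : X → ℝ, IsDensity μ p → (∀ᵐ x ∂μ, x ∈ A → p x = p₀ x) →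
      (∫ x in A, φ x * p₀ x ∂μ) + ∫ x in Aᶜ, φ x * p x ∂μ ≤ α) :
    -- (i) `φ̃` also has level `α`:
    (∀ p : X → ℝ, IsDensity μ p → (∀ᵐ x ∂μ, x ∈ A → p x = p₀ x) →
      ∫ x, (if x ∈ A then φ x
            else min ((α - ∫ y in A, φ y * p₀ y ∂μ) / (1 - ∫ y in A, p₀ y ∂μ)) 1)
          * p x ∂μ ≤ α) ∧
    -- (ii) `φ ≤ φ̃` μ-a.e., and `φ̃` is uniformly more powerful than `φ`:
    (∀ᵐ x ∂μ, φ x ≤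
      (if x ∈ A then φ x
       else min ((α - ∫ y in A, φ y * p₀ y ∂μ) / (1 - ∫ y in A, p₀ y ∂μ)) 1)) ∧
    (∀ q : X → ℝ, IsDensity μ q →
      ∫ x, φ x * q x ∂μ ≤
        ∫ x, (if x ∈ A then φ x
              else min ((α - ∫ y in A, φ y * p₀ y ∂μ) / (1 - ∫ y in A, p₀ y ∂μ)) 1)
            * q x ∂μ) := by
  obtain ⟨hαpos, hα1⟩ := hα
  obtain ⟨hp₀m, hp₀nn, hp₀int⟩ := hp₀
  have hp₀I : Integrable p₀ μ := IsDensity.integrable ⟨hp₀m, hp₀nn, hp₀int⟩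
  set t := ∫ y in A, φ y * p₀ y ∂μ with ht
  set P := 1 - ∫ y in A, p₀ y ∂μ with hPdef
  have hPpos : 0 < P := by simpa [hPdef] using sub_pos.mpr hP₀
  set β := min ((α - t) / P) 1 with hβdef
  -- μ Aᶜ is positive
  have hAc : 0 < μ Aᶜ := by
    rcases eq_zero_or_pos (μ Aᶜ) with h | h
    · exfalso
      have h1 : ∫ x in Aᶜ, p₀ x ∂μ = 0 := by
        rw [Measure.restrict_eq_zero.mpr h]; simp
      have h2 : (∫ x in A, p₀ x ∂μ) + ∫ x in Aᶜ, p₀ x ∂μ = 1 := by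
        rw [integral_add_compl hA hp₀I, hp₀int]
      rw [h1, add_zero] at h2
      exact absurd h2 hP₀.ne
    · exact h
  -- the key estimate from applying `hlevel` to a suitable density
  have key : ∀ B : Set X, MeasurableSet B → B ⊆ Aᶜ → 0 < μ B → μ B < ⊤ →
      t + (P / (μ B).toReal) * ∫ x in B, φ x ∂μ ≤ α := by
    intro B hB hBA hB0 hBtop
    have hμB : 0 < (μ B).toReal := ENNReal.toReal_pos hB0.ne' hBtop.ne
    set c := P / (μ B).toReal with hc
    have hcpos : 0 < c := div_pos hPpos hμB
    set p : X → ℝ := fun x => A.indicator p₀ x + B.indicator (fun _ => c) x with hp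
    have hpm : Measurable p := (hp₀m.indicator hA).add (measurable_const.indicator hB)
    have hpnn : ∀ x, 0 ≤ p x := fun x =>
      add_nonneg (Set.indicator_nonneg (fun y _ => hp₀nn y) x)
        (Set.indicator_nonneg (fun _ _ => hcpos.le) x)
    have hIB : Integrable (B.indicator fun _ => c) μ := by
      rw [integrable_indicator_iff hB]
      exact integrableOn_const hBtop.ne
    have hIA : Integrable (A.indicator p₀) μ := hp₀I.indicator hA
    have hpint : ∫ x, p x ∂μ = 1 := by
      rw [hp]
      rw [integral_add hIA hIB, integral_indicator hA, integral_indicator hB,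
        setIntegral_const]
      rw [smul_eq_mul, hc, measureReal_def, hPdef]
      field_simp
      ring
    have hpd : IsDensity μ p := ⟨hpm, hpnn, hpint⟩
    have hpeq : ∀ᵐ x ∂μ, x ∈ A → p x = p₀ x := by
      refine Filter.Eventually.of_forall fun x hx => ?_
      have hxB : x ∉ B := fun hxB => (hBA hxB) hx
      simp [hp, Set.indicator_of_mem hx, Set.indicator_of_notMem hxB]
    have h := hlevel p hpd hpeq
    have hcompl : ∫ x in Aᶜ, φ x * p x ∂μ = c * ∫ x in B, φ x ∂μ := by
      have h1 : ∫ x in Aᶜ, φ x * p x ∂μ = ∫ x in Aᶜ, B.indicator (fun y => φ y * c) x ∂μ := by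
        refine setIntegral_congr_fun hA.compl fun x hx => ?_
        have hxA : x ∉ A := hx
        by_cases hxB : x ∈ B
        · simp [hp, Set.indicator_of_mem hxB, Set.indicator_of_notMem hxA]
        · simp [hp, Set.indicator_of_notMem hxB, Set.indicator_of_notMem hxA]
      rw [h1, setIntegral_indicator hB, Set.inter_eq_right.mpr hBA,
        integral_mul_const, mul_comm]
    rw [hcompl] at h
    exact h
  -- some set B₀ of positive finite measure inside Aᶜ
  obtain ⟨B₀, hB₀m, hB₀A, hB₀0, hB₀top⟩ :=
    Measure.exists_subset_measure_lt_top hA.compl hAc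
  have htα : t ≤ α := by
    have h := key B₀ hB₀m hB₀A hB₀0 hB₀top
    have h2 : 0 ≤ (P / (μ B₀).toReal) * ∫ x in B₀, φ x ∂μ :=
      mul_nonneg (div_nonneg hPpos.le ENNReal.toReal_nonneg)
        (setIntegral_nonneg hB₀m fun x _ => (hφ01 x).1)
    linarith
  have hβ0 : 0 ≤ β := le_min (div_nonneg (by linarith) hPpos.le) zero_le_one
  have hβ1 : β ≤ 1 := min_le_right _ _
  have hβP : β * P ≤ α - t := by
    have := min_le_left ((α - t) / P) 1
    calc β * P ≤ ((α - t) / P) * P := by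
          exact mul_le_mul_of_nonneg_right this hPpos.le
      _ = α - t := by field_simp
  -- (ii) the a.e. domination
  have haedom : ∀ᵐ x ∂μ, φ x ≤ (if x ∈ A then φ x else β) := by
    by_cases hcase : 1 ≤ (α - t) / P
    · refine Filter.Eventually.of_forall fun x => ?_
      by_cases hx : x ∈ A
      · simp [hx]
      · simp only [hx, if_false]
        rw [hβdef, min_eq_right hcase]
        exact (hφ01 x).2
    · -- β = (α - t)/P < 1; show φ ≤ β a.e. on Aᶜ
      have hβeq : β = (α - t) / P := min_eq_left (le_of_not_ge hcase)
      have hS : μ {x | ¬ (φ x ≤ (if x ∈ A then φ x else β))} = 0 := by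
        set S := {x | ¬ (φ x ≤ (if x ∈ A then φ x else β))} with hSdef
        have hSsub : S ⊆ ⋃ n : ℕ, (Aᶜ ∩ {x | β + 1/(n+1) ≤ φ x}) := by
          intro x hx
          simp only [hSdef, Set.mem_setOf_eq] at hx
          by_cases hxA : x ∈ A
          · simp [hxA] at hx
          · simp only [hxA, if_false, not_le] at hx
            obtain ⟨n, hn⟩ := exists_nat_one_div_lt (sub_pos.mpr hx)
            refine Set.mem_iUnion.mpr ⟨n, hxA, ?_⟩
            simp only [Set.mem_setOf_eq]
            linarith
        have hSn : ∀ n : ℕ, μ (Aᶜ ∩ {x | β + 1/(n+1) ≤ φ x}) = 0 := by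
          intro n
          by_contra hne
          have hpos : 0 < μ (Aᶜ ∩ {x | β + 1/(n+1) ≤ φ x}) :=
            pos_iff_ne_zero.mpr hne
          have hSnm : MeasurableSet (Aᶜ ∩ {x | β + 1/((n:ℝ)+1) ≤ φ x}) :=
            hA.compl.inter (measurableSet_le measurable_const hφm)
          obtain ⟨B, hBm, hBsub, hB0, hBtop⟩ :=
            Measure.exists_subset_measure_lt_top hSnm hpos
          have hBA : B ⊆ Aᶜ := fun x hx => (hBsub hx).1
          have h := key B hBm hBA hB0 hBtop
          have hμB : 0 < (μ B).toReal := ENNReal.toReal_pos hB0.ne' hBtop.ne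
          have hlow : (β + 1/((n:ℝ)+1)) * (μ B).toReal ≤ ∫ x in B, φ x ∂μ := by
            have hconst : ∫ x in B, (β + 1/((n:ℝ)+1)) ∂μ
                = (β + 1/((n:ℝ)+1)) * (μ B).toReal := by
              rw [setIntegral_const, smul_eq_mul, mul_comm, measureReal_def]
            rw [← hconst]
            refine setIntegral_mono_on (integrableOn_const hBtop.ne)
              (Measure.integrableOn_of_bounded (M := 1) hBtop.ne
                hφm.aestronglyMeasurable ?_) hBm fun x hx => (hBsub hx).2
            refine Filter.Eventually.of_forall fun x => ?_
            rw [Real.norm_eq_abs, abs_le]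
            exact ⟨by linarith [(hφ01 x).1], (hφ01 x).2⟩
          have hchain : t + P * (β + 1/((n:ℝ)+1)) ≤ α := by
            have h2 : (P / (μ B).toReal) * ((β + 1/((n:ℝ)+1)) * (μ B).toReal)
                ≤ (P / (μ B).toReal) * ∫ x in B, φ x ∂μ :=
              mul_le_mul_of_nonneg_left hlow (div_nonneg hPpos.le ENNReal.toReal_nonneg)
            have h3 : (P / (μ B).toReal) * ((β + 1/((n:ℝ)+1)) * (μ B).toReal)
                = P * (β + 1/((n:ℝ)+1)) := by field_simp
            rw [h3] at h2
            linarith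
          have hfinal : β + 1/((n:ℝ)+1) ≤ β := by
            have h4 : β + 1/((n:ℝ)+1) ≤ (α - t)/P := by
              rw [le_div_iff₀ hPpos]
              nlinarith
            rw [← hβeq] at h4
            exact h4
          have hpos' : (0:ℝ) < 1/((n:ℝ)+1) := by positivity
          linarith
        exact measure_mono_null hSsub (measure_iUnion_null hSn)
      rw [ae_iff]
      exact hS
  refine ⟨?_, haedom, ?_⟩
  · -- (i)
    intro p hpd hpeq
    obtain ⟨hpm, hpnn, hpint⟩ := hpd
    have hpI : Integrable p μ := IsDensity.integrable ⟨hpm, hpnn, hpint⟩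
    set f : X → ℝ := fun x => (if x ∈ A then φ x else β) * p x with hf
    have hψm : Measurable (fun x => if x ∈ A then φ x else β) :=
      Measurable.ite hA hφm measurable_const
    have hψ01 : ∀ x, 0 ≤ (if x ∈ A then φ x else β) ∧ (if x ∈ A then φ x else β) ≤ 1 := by
      intro x
      by_cases hx : x ∈ A <;> simp [hx, (hφ01 x).1, (hφ01 x).2, hβ0, hβ1]
    have hfI : Integrable f μ := by
      refine hpI.mono (hψm.mul hpm).aestronglyMeasurable ?_
      refine Filter.Eventually.of_forall fun x => ?_
      rw [hf]
      simp only [Real.norm_eq_abs, abs_mul, abs_of_nonneg (hpnn x),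
        abs_of_nonneg (hψ01 x).1]
      exact mul_le_of_le_one_left (hpnn x) (hψ01 x).2
    have hApeq : ∫ x in A, p x ∂μ = ∫ x in A, p₀ x ∂μ :=
      setIntegral_congr_ae hA hpeq
    have hsplit : (∫ x in A, f x ∂μ) + ∫ x in Aᶜ, f x ∂μ = ∫ x, f x ∂μ :=
      integral_add_compl hA hfI
    have hfA : ∫ x in A, f x ∂μ = t := by
      have h1 : ∫ x in A, f x ∂μ = ∫ x in A, φ x * p x ∂μ :=
        setIntegral_congr_fun hA fun x hx => by simp [hf, hx]
      have h2 : ∫ x in A, φ x * p x ∂μ = ∫ x in A, φ x * p₀ x ∂μ :=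
        setIntegral_congr_ae hA (hpeq.mono fun x hx hxA => by rw [hx hxA])
      rw [h1, h2, ht]
    have hfAc : ∫ x in Aᶜ, f x ∂μ = β * P := by
      have h1 : ∫ x in Aᶜ, f x ∂μ = ∫ x in Aᶜ, β * p x ∂μ :=
        setIntegral_congr_fun hA.compl fun x hx => by
          simp [hf, if_neg (Set.notMem_of_mem_compl hx)]
      have h2 : ∫ x in Aᶜ, p x ∂μ = P := by
        have := integral_add_compl hA hpI
        rw [hpint, hApeq] at this
        rw [hPdef]
        linarith
      rw [h1, integral_const_mul, h2]
    calc ∫ x, f x ∂μ = t + β * P := by rw [← hsplit, hfA, hfAc]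
      _ ≤ α := by linarith
  · -- (iii)
    intro q hqd
    obtain ⟨hqm, hqnn, hqint⟩ := hqd
    have hqI : Integrable q μ := IsDensity.integrable ⟨hqm, hqnn, hqint⟩
    have hψm : Measurable (fun x => if x ∈ A then φ x else β) :=
      Measurable.ite hA hφm measurable_const
    have hψ01 : ∀ x, 0 ≤ (if x ∈ A then φ x else β) ∧ (if x ∈ A then φ x else β) ≤ 1 := by
      intro x
      by_cases hx : x ∈ A <;> simp [hx, (hφ01 x).1, (hφ01 x).2, hβ0, hβ1]
    have hgI : Integrable (fun x => φ x * q x) μ := by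
      refine hqI.mono (hφm.mul hqm).aestronglyMeasurable ?_
      refine Filter.Eventually.of_forall fun x => ?_
      simp only [Real.norm_eq_abs, abs_mul, abs_of_nonneg (hqnn x),
        abs_of_nonneg (hφ01 x).1]
      exact mul_le_of_le_one_left (hqnn x) (hφ01 x).2
    have hfI : Integrable (fun x => (if x ∈ A then φ x else β) * q x) μ := by
      refine hqI.mono (hψm.mul hqm).aestronglyMeasurable ?_
      refine Filter.Eventually.of_forall fun x => ?_
      simp only [Real.norm_eq_abs, abs_mul, abs_of_nonneg (hqnn x),
        abs_of_nonneg (hψ01 x).1]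
      exact mul_le_of_le_one_left (hqnn x) (hψ01 x).2
    refine integral_mono_ae hgI hfI ?_
    exact haedom.mono fun x hx => mul_le_mul_of_nonneg_right hx (hqnn x)

end
end
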